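/- There exists a Lie algebra L over the field with two elements 𝔽₂ such that [x,y,z,z] = 0 for all x, y, z ∈ L (in particular L satisfies the 3-Engel identity [x,y,y,y] = 0 for all x, y ∈ L), and L is not nilpotent. -/

import Mathlib

section Construction

open Finsupp

local notation "F" => ZMod 2

/-- char-2 fact for any `F`-module. -/
private lemma addSelf {M : Type*} [AddCommMonoid M] [Module (ZMod 2) M] (a : M) :
    a + a = 0 := by
  have : ((2 : ZMod 2)) • a = a + a := two_smul _ a
  rw [← this, show (2 : ZMod 2) = 0 by decide, zero_smul]

/-- The abelian ideal: functions `Finset ℕ →₀ F`, basis `e_S`. -/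
local notation "Mo" => (Finset ℕ →₀ ZMod 2)

/-- `T i` sends `e_S` to `e_{S ∪ {i}}` if `i ∉ S`, and to `0` otherwise. -/
noncomputable def Tmap (i : ℕ) : Mo →ₗ[F] Mo :=
  Finsupp.lsum F (fun S => if i ∈ S then 0 else Finsupp.lsingle (insert i S))

lemma Tmap_single (i : ℕ) (S : Finset ℕ) (a : F) :
    Tmap i (Finsupp.single S a) =
      if i ∈ S then 0 else Finsupp.single (insert i S) a := by
  rw [Tmap, Finsupp.lsum_single]
  split_ifs <;> simp

lemma Tmap_sq (i : ℕ) : (Tmap i).comp (Tmap i) = 0 := by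
  apply Finsupp.lhom_ext
  intro S a
  simp only [LinearMap.comp_apply, Tmap_single, LinearMap.zero_apply]
  split_ifs with h
  · simp
  · rw [Tmap_single]
    simp

lemma Tmap_comm (i j : ℕ) : (Tmap i).comp (Tmap j) = (Tmap j).comp (Tmap i) := by
  rcases eq_or_ne i j with rfl | hij
  · rfl
  apply Finsupp.lhom_ext
  intro S a
  simp only [LinearMap.comp_apply]
  rw [Tmap_single j, Tmap_single i]
  by_cases h1 : i ∈ S <;> by_cases h2 : j ∈ S
  · rw [if_pos h1, if_pos h2, map_zero, map_zero]
  · rw [if_pos h1, if_neg h2, map_zero, Tmap_single,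
      if_pos (Finset.mem_insert_of_mem h1)]
  · rw [if_neg h1, if_pos h2, map_zero, Tmap_single,
      if_pos (Finset.mem_insert_of_mem h2)]
  · rw [if_neg h1, if_neg h2, Tmap_single, Tmap_single,
      if_neg (by simp [Finset.mem_insert, hij, h1]),
      if_neg (by simp [Finset.mem_insert, Ne.symm hij, h2]),
      Finset.insert_comm]

/-- The action of a degree-one element `ξ = Σ λᵢ eᵢ`. -/
noncomputable def Amap : (ℕ →₀ F) →ₗ[F] (Mo →ₗ[F] Mo) :=
  Finsupp.lsum F (fun i => LinearMap.toSpanSingleton F _ (Tmap i))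

lemma Amap_single (i : ℕ) (c : F) : Amap (Finsupp.single i c) = c • Tmap i := by
  rw [Amap, Finsupp.lsum_single, LinearMap.toSpanSingleton_apply]

lemma Amap_comm (ξ ζ : ℕ →₀ F) (m : Mo) : Amap ξ (Amap ζ m) = Amap ζ (Amap ξ m) := by
  induction ξ using Finsupp.induction_linear with
  | zero => simp
  | add f g hf hg => simp [map_add, hf, hg]
  | single i c =>
    induction ζ using Finsupp.induction_linear with
    | zero => simp
    | add f g hf hg => simp [map_add, hf, hg]
    | single j d =>
      simp only [Amap_single, LinearMap.smul_apply, map_smul]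
      rw [show Tmap i (Tmap j m) = Tmap j (Tmap i m) from
        congrFun (congrArg DFunLike.coe (Tmap_comm i j)) m]
      rw [smul_comm]

lemma Amap_sq (ξ : ℕ →₀ F) (m : Mo) : Amap ξ (Amap ξ m) = 0 := by
  induction ξ using Finsupp.induction_linear with
  | zero => simp
  | add f g hf hg =>
    simp only [map_add, LinearMap.add_apply, hf, hg, zero_add, add_zero]
    rw [Amap_comm g f]
    exact addSelf _
  | single i c =>
    simp only [Amap_single, LinearMap.smul_apply, map_smul]
    rw [show Tmap i (Tmap i m) = 0 from
      (congrFun (congrArg DFunLike.coe (Tmap_sq i)) m : _)]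
    simp

/-- The Lie algebra: `Mo ⊕ span(xᵢ)` with `[xᵢ, e_S] = e_{S∪{i}}`. -/
local notation "LL" => ((Finset ℕ →₀ ZMod 2) × (ℕ →₀ ZMod 2))

noncomputable instance lieRingLL : LieRing LL :=
  { (inferInstance : AddCommGroup LL) with
    bracket := fun x y => (Amap x.2 y.1 + Amap y.2 x.1, 0)
    add_lie := by
      intro x y z
      show ((Amap (x.2 + y.2)) z.1 + Amap z.2 (x.1 + y.1), (0 : ℕ →₀ F)) =
        (Amap x.2 z.1 + Amap z.2 x.1, (0 : ℕ →₀ F)) +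
        (Amap y.2 z.1 + Amap z.2 y.1, (0 : ℕ →₀ F))
      rw [Prod.mk_add_mk, Prod.mk.injEq]
      refine ⟨?_, by simp⟩
      simp only [map_add, LinearMap.add_apply]
      abel
    lie_add := by
      intro x y z
      show ((Amap x.2) (y.1 + z.1) + Amap (y.2 + z.2) x.1, (0 : ℕ →₀ F)) =
        (Amap x.2 y.1 + Amap y.2 x.1, (0 : ℕ →₀ F)) +
        (Amap x.2 z.1 + Amap z.2 x.1, (0 : ℕ →₀ F))
      rw [Prod.mk_add_mk, Prod.mk.injEq]
      refine ⟨?_, by simp⟩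
      simp only [map_add, LinearMap.add_apply]
      abel
    lie_self := by
      intro x
      show (Amap x.2 x.1 + Amap x.2 x.1, (0 : ℕ →₀ F)) = 0
      rw [addSelf]
      rfl
    leibniz_lie := by
      intro x y z
      show (Amap x.2 (Amap y.2 z.1 + Amap z.2 y.1) + Amap (0 : ℕ →₀ F) x.1,
          (0 : ℕ →₀ F)) =
        (Amap (0 : ℕ →₀ F) z.1 + Amap z.2 (Amap x.2 y.1 + Amap y.2 x.1),
          (0 : ℕ →₀ F)) +
        (Amap y.2 (Amap x.2 z.1 + Amap z.2 x.1) + Amap (0 : ℕ →₀ F) y.1,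
          (0 : ℕ →₀ F))
      rw [Prod.mk_add_mk, Prod.mk.injEq]
      refine ⟨?_, by simp⟩
      simp only [map_zero, map_add, LinearMap.zero_apply, zero_add, add_zero]
      rw [Amap_comm x.2 y.2 z.1, Amap_comm x.2 z.2 y.1, Amap_comm z.2 y.2 x.1]
      have h := addSelf (Amap y.2 (Amap z.2 x.1))
      calc Amap y.2 (Amap x.2 z.1) + Amap z.2 (Amap x.2 y.1)
          = Amap z.2 (Amap x.2 y.1) +
            (Amap y.2 (Amap x.2 z.1) +
              (Amap y.2 (Amap z.2 x.1) + Amap y.2 (Amap z.2 x.1))) := by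
            rw [h]; abel
        _ = _ := by abel }

lemma lie_def (x y : LL) : ⁅x, y⁆ = (Amap x.2 y.1 + Amap y.2 x.1, 0) := rfl

noncomputable instance lieAlgebraLL : LieAlgebra F LL where
  lie_smul t x y := by
    show (Amap x.2 (t • y.1) + Amap (t • y.2) x.1, (0 : ℕ →₀ F)) =
      t • (Amap x.2 y.1 + Amap y.2 x.1, (0 : ℕ →₀ F))
    rw [Prod.smul_mk, Prod.mk.injEq]
    constructor
    · simp [smul_add]
    · simp

end Construction

/-- There is a non-nilpotent Lie algebra `L` over `𝔽₂` satisfying the identity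
`[x,y,z,z] = 0` (and in particular the 3-Engel identity `[x,y,y,y] = 0`). -/
theorem exists_nonNilpotent_threeEngel_char_two :
    ∃ (L : Type) (_ : LieRing L) (_ : LieAlgebra (ZMod 2) L),
      (∀ x y z : L, ⁅⁅⁅x, y⁆, z⁆, z⁆ = 0) ∧
      (∀ x y : L, ⁅⁅⁅x, y⁆, y⁆, y⁆ = 0) ∧
      ¬ ∃ c : ℕ, LieModule.lowerCentralSeries (ZMod 2) L L c = ⊥ := by
  have key : ∀ x y z : (Finset ℕ →₀ ZMod 2) × (ℕ →₀ ZMod 2),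
      ⁅⁅⁅x, y⁆, z⁆, z⁆ = 0 := by
    intro x y z
    rw [lie_def x y, lie_def, lie_def]
    show (Amap (0 : ℕ →₀ ZMod 2) z.1 +
        Amap z.2 (Amap (0 : ℕ →₀ ZMod 2) z.1 +
          Amap z.2 (Amap x.2 y.1 + Amap y.2 x.1)), (0 : ℕ →₀ ZMod 2)) = 0
    rw [show ((0 : (Finset ℕ →₀ ZMod 2) × (ℕ →₀ ZMod 2))) = (0, 0) from rfl,
      Prod.mk.injEq]
    refine ⟨?_, rfl⟩
    simp [Amap_sq]
  refine ⟨(Finset ℕ →₀ ZMod 2) × (ℕ →₀ ZMod 2), lieRingLL, lieAlgebraLL,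
    key, fun x y => key x y y, ?_⟩
  rintro ⟨c, hc⟩
  set v : ℕ → ((Finset ℕ →₀ ZMod 2) × (ℕ →₀ ZMod 2)) :=
    fun k => (Finsupp.single (Finset.range k) (1 : ZMod 2), 0) with hv
  have hmem : ∀ k, v k ∈ LieModule.lowerCentralSeries (ZMod 2)
      ((Finset ℕ →₀ ZMod 2) × (ℕ →₀ ZMod 2))
      ((Finset ℕ →₀ ZMod 2) × (ℕ →₀ ZMod 2)) k := by
    intro k
    induction k with
    | zero => simp
    | succ k ih =>
      rw [LieModule.lowerCentralSeries_succ]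
      have keyv : v (k + 1) = ⁅((0, Finsupp.single k (1 : ZMod 2)) :
          (Finset ℕ →₀ ZMod 2) × (ℕ →₀ ZMod 2)), v k⁆ := by
        rw [lie_def]
        rw [hv]
        simp only
        rw [Prod.mk.injEq]
        refine ⟨?_, rfl⟩
        rw [Amap_single]
        simp only [map_zero, add_zero, LinearMap.smul_apply, one_smul]
        rw [Tmap_single, if_neg Finset.notMem_range_self, Finset.range_add_one]
      rw [keyv]
      exact LieSubmodule.lie_mem_lie (LieSubmodule.mem_top _) ih
  have h0 := hmem c
  rw [hc, LieSubmodule.mem_bot] at h0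
  have h1 : Finsupp.single (Finset.range c) (1 : ZMod 2) = 0 :=
    congrArg Prod.fst h0
  exact one_ne_zero (Finsupp.single_eq_zero.mp h1)
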